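/- Let G = GL₂(ℝ), T₂ the diagonal torus, N₂ the upper-triangular unipotent subgroup, and D_k the discrete series representation of GL₂(ℝ) of minimal K-type with highest weight k+1 and central character sgn^{k+1}. Then the zeroth N₂-coinvariants (Jacquet module) of D_k, as a T₂ = ℝ^× × ℝ^×-module, equals (ε|·|^{(k+1)/2} ⊠ |·|^{−(k+1)/2}) ⊕ (ε·sgn·|·|^{(k+1)/2} ⊠ sgn·|·|^{−(k+1)/2}), where ε = sgn if k is even and ε = 1 if k is odd; moreover all higher N₂-homology of D_k vanishes. -/

import Mathlib

open Matrix

attribute [local instance 100] LieRing.ofAssociativeRing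

namespace JMDaux

noncomputable def lam (k : ℕ) : ℕ → ℂ := fun n => ∏ j ∈ Finset.range n, (2*((k:ℂ)+1+j))

lemma lam_zero (k : ℕ) : lam k 0 = 1 := by simp [lam]

lemma lam_succ (k n : ℕ) : lam k (n+1) = (2*((k:ℂ)+1+n)) * lam k n := by
  rw [lam, lam, Finset.prod_range_succ]; ring

lemma lam_ne (k n : ℕ) : lam k n ≠ 0 := by
  rw [lam, Finset.prod_ne_zero_iff]
  intro j _
  have h2 : (2*(k+1+j) : ℕ) ≠ 0 := by positivity
  have h3 : (2*((k:ℂ)+1+j)) = ((2*(k+1+j) : ℕ) : ℂ) := by push_cast; ring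
  rw [h3]
  exact Nat.cast_ne_zero.mpr h2

end JMDaux

set_option maxHeartbeats 2000000 in
open Complex in
/-- Let `D_k` be the discrete series representation of `GL₂(ℝ)` with
central character `sgn^{k+1}` and minimal `K`-type of highest weight `k+1`; its underlying
`(𝔤, K)`-module is axiomatized below: `V` is a module over `𝔤 = gl₂(ℂ)` (via `ρ`), with
the action `τ` of `diag(1,−1) ∈ O(2)`, whose `SO(2)`-weights (eigenvalues `i·m` of the
rotation generator `!![0,1;-1,0]`) are exactly the `m` with `|m| ≥ k+1`, `m ≡ k+1 (mod 2)`,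
each with multiplicity one, with the derived central action zero, and irreducible.  Then,
with `N = 𝔫·V` the span of `ρ(e)V` (`e = !![0,1;0,0]` spanning the Lie algebra of `N₂`),
the Jacquet module `H₀(N₂, D_k) = V/N` is two-dimensional; the split torus Lie algebra
acts on it by the exponents `(k+1)/2` and `−(k+1)/2` (i.e. by `|·|^{(k+1)/2} ⊠
|·|^{−(k+1)/2}` on both lines), and the two lines are exchanged into the claimed
characters `(ε|·|^{(k+1)/2} ⊠ |·|^{−(k+1)/2}) ⊕ (ε·sgn·|·|^{(k+1)/2} ⊠ sgn·|·|^{−(k+1)/2})`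
by the `τ`-eigenvalues `+1` and `−1`.  Moreover all higher `N₂`-homology vanishes, i.e.
`ρ(e)` is injective (`H₁(𝔫, D_k) = ker ρ(e) = 0` for the one-dimensional `𝔫`). -/
theorem jacquet_module_of_discrete_series
    (k : ℕ) (hk : 1 ≤ k)
    (V : Type) [AddCommGroup V] [Module ℂ V]
    (ρ : Matrix (Fin 2) (Fin 2) ℂ →ₗ⁅ℂ⁆ Module.End ℂ V)
    (τ : V ≃ₗ[ℂ] V)
    (hτ2 : ∀ v : V, τ (τ v) = v)
    (hτρ : ∀ (A : Matrix (Fin 2) (Fin 2) ℂ) (v : V),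
      τ (ρ A v) = ρ (!![1, 0; 0, -1] * A * !![1, 0; 0, -1]) (τ v))
    (hcenter : ρ 1 = 0)
    (hweights : ∀ m : ℤ,
      Module.finrank ℂ (Module.End.eigenspace (ρ !![0, 1; -1, 0]) (Complex.I * m)) =
        if ((k : ℤ) + 1 ≤ |m| ∧ (m - ((k : ℤ) + 1)) % 2 = 0) then 1 else 0)
    (hspan : (⨆ m : ℤ, Module.End.eigenspace (ρ !![0, 1; -1, 0]) (Complex.I * m)) = ⊤)
    (hirred : ∀ p : Submodule ℂ V,
      (∀ (A : Matrix (Fin 2) (Fin 2) ℂ), ∀ v ∈ p, ρ A v ∈ p) →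
      (∀ v ∈ p, τ v ∈ p) → p = ⊥ ∨ p = ⊤) :
    Module.finrank ℂ
        (V ⧸ Submodule.span ℂ {w : V | ∃ v : V, w = ρ !![0, 1; 0, 0] v}) = 2 ∧
    (∀ v : V, ρ !![1, 0; 0, 0] v - (((k : ℂ) + 1) / 2) • v ∈
        Submodule.span ℂ {w : V | ∃ v : V, w = ρ !![0, 1; 0, 0] v}) ∧
    (∀ v : V, ρ !![0, 0; 0, 1] v + (((k : ℂ) + 1) / 2) • v ∈
        Submodule.span ℂ {w : V | ∃ v : V, w = ρ !![0, 1; 0, 0] v}) ∧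
    (∃ u₁ u₂ : V,
      (Submodule.span ℂ {u₁, u₂} ⊔
          Submodule.span ℂ {w : V | ∃ v : V, w = ρ !![0, 1; 0, 0] v} = ⊤) ∧
      (∀ a b : ℂ, a • u₁ + b • u₂ ∈
          Submodule.span ℂ {w : V | ∃ v : V, w = ρ !![0, 1; 0, 0] v} → a = 0 ∧ b = 0) ∧
      τ u₁ - u₁ ∈ Submodule.span ℂ {w : V | ∃ v : V, w = ρ !![0, 1; 0, 0] v} ∧
      τ u₂ + u₂ ∈ Submodule.span ℂ {w : V | ∃ v : V, w = ρ !![0, 1; 0, 0] v}) ∧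
    Function.Injective (ρ !![0, 1; 0, 0] : V →ₗ[ℂ] V) := by
  classical
  -- rewrite the span as a range
  have hNset : {w : V | ∃ v : V, w = ρ !![0, 1; 0, 0] v}
      = ↑(LinearMap.range (ρ !![0, 1; 0, 0])) := by
    ext w; simp [eq_comm]
  have hNspan : Submodule.span ℂ {w : V | ∃ v : V, w = ρ !![0, 1; 0, 0] v}
      = LinearMap.range (ρ !![0, 1; 0, 0]) := by
    rw [hNset, Submodule.span_eq]
  rw [hNspan]
  -- operators
  obtain ⟨Wo, hWodef⟩ : ∃ X : Module.End ℂ V, X = ρ !![0, 1; -1, 0] := ⟨_, rfl⟩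
  obtain ⟨Uo, hUodef⟩ : ∃ X : Module.End ℂ V, X = ρ !![1, I; I, -1] := ⟨_, rfl⟩
  obtain ⟨Do, hDodef⟩ : ∃ X : Module.End ℂ V, X = ρ !![1, -I; -I, -1] := ⟨_, rfl⟩
  rw [show (ρ !![0, 1; 0, 0] : Module.End ℂ V)
      = (1/2 : ℂ) • Wo + (I/4) • Do - (I/4) • Uo by
    rw [hWodef, hUodef, hDodef, ← _root_.map_smul ρ, ← _root_.map_smul ρ, ← _root_.map_smul ρ, ← _root_.map_add ρ, ← _root_.map_sub ρ]
    congr 1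
    ext i j; fin_cases i <;> fin_cases j <;>
      simp [Fin.sum_univ_succ] <;> ring_nf <;> rw [I_sq] <;> ring]
  obtain ⟨Eo, hEodef⟩ : ∃ X : Module.End ℂ V,
      X = (1/2 : ℂ) • Wo + (I/4) • Do - (I/4) • Uo := ⟨_, rfl⟩
  rw [← hEodef]
  set N := LinearMap.range Eo with hNdef
  -- pointwise description of Eo
  have hEo : ∀ v : V, Eo v = (1/2 : ℂ) • Wo v + (I/4) • Do v - (I/4) • Uo v := by
    intro v; rw [hEodef]; simp
  -- commutator helper
  have ρcomm : ∀ (A B C : Matrix (Fin 2) (Fin 2) ℂ) (c : ℂ), A*B - B*A = c • C →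
      ∀ v : V, ρ A (ρ B v) = ρ B (ρ A v) + c • ρ C v := by
    intro A B C c h v
    have h2 : ρ A * ρ B - ρ B * ρ A = c • ρ C := by
      rw [← Ring.lie_def, ← LieHom.map_lie, Ring.lie_def, h, _root_.map_smul ρ]
    have h3 := congrArg (fun f : Module.End ℂ V => f v) h2
    simp only [LinearMap.sub_apply, Module.End.mul_apply, LinearMap.smul_apply] at h3
    rw [sub_eq_iff_eq_add] at h3
    rw [h3, add_comm]
  have hWU : ∀ v : V, Wo (Uo v) = Uo (Wo v) + (2*I) • Uo v := by
    rw [hWodef, hUodef]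
    refine ρcomm _ _ _ _ ?_
    ext i j; fin_cases i <;> fin_cases j <;>
      simp [Matrix.mul_apply, Fin.sum_univ_succ] <;> ring_nf <;> rw [I_sq] <;> ring
  have hWD : ∀ v : V, Wo (Do v) = Do (Wo v) + (-(2*I)) • Do v := by
    rw [hWodef, hDodef]
    refine ρcomm _ _ _ _ ?_
    ext i j; fin_cases i <;> fin_cases j <;>
      simp [Matrix.mul_apply, Fin.sum_univ_succ] <;> ring_nf <;> rw [I_sq] <;> ring
  have hDU : ∀ v : V, Do (Uo v) = Uo (Do v) + (4*I) • Wo v := by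
    rw [hDodef, hUodef, hWodef]
    refine ρcomm _ _ _ _ ?_
    ext i j; fin_cases i <;> fin_cases j <;>
      simp [Matrix.mul_apply, Fin.sum_univ_succ] <;> ring_nf <;> rw [I_sq] <;> ring
  -- τ relations
  have hτU : ∀ v : V, τ (Uo v) = Do (τ v) := by
    intro v
    rw [hUodef, hDodef, hτρ]
    congr 2
    ext i j; fin_cases i <;> fin_cases j <;>
      simp [Matrix.mul_apply, Fin.sum_univ_succ]
  have hτD : ∀ v : V, τ (Do v) = Uo (τ v) := by
    intro v
    rw [hUodef, hDodef, hτρ]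
    congr 2
    ext i j; fin_cases i <;> fin_cases j <;>
      simp [Matrix.mul_apply, Fin.sum_univ_succ]
  have hτW : ∀ v : V, τ (Wo v) = -(Wo (τ v)) := by
    intro v
    rw [hWodef, hτρ, show (!![1, 0; 0, -1] * !![0, 1; -1, 0] * !![1, 0; 0, -1]
        : Matrix (Fin 2) (Fin 2) ℂ) = -(!![0, 1; -1, 0]) by
      ext i j; fin_cases i <;> fin_cases j <;>
        simp [Matrix.mul_apply, Fin.sum_univ_succ], _root_.map_neg ρ, LinearMap.neg_apply]
  -- every ρ A is a combination of Uo, Do, Wo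
  have hρspan : ∀ A : Matrix (Fin 2) (Fin 2) ℂ, ∃ a b c : ℂ,
      ∀ v : V, ρ A v = a • Uo v + b • Do v + c • Wo v := by
    intro A
    refine ⟨(A 0 0 - A 1 1)/4 - I*(A 0 1 + A 1 0)/4,
      (A 0 0 - A 1 1)/4 + I*(A 0 1 + A 1 0)/4, (A 0 1 - A 1 0)/2, fun v => ?_⟩
    have hA : A = ((A 0 0 + A 1 1)/2) • (1 : Matrix (Fin 2) (Fin 2) ℂ)
      + ((A 0 0 - A 1 1)/4 - I*(A 0 1 + A 1 0)/4) • !![1, I; I, -1]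
      + ((A 0 0 - A 1 1)/4 + I*(A 0 1 + A 1 0)/4) • !![1, -I; -I, -1]
      + ((A 0 1 - A 1 0)/2) • !![0, 1; -1, 0] := by
      ext i j; fin_cases i <;> fin_cases j <;>
        simp [Fin.sum_univ_succ, Matrix.one_apply] <;> ring_nf <;>
        rw [I_sq] <;> ring
    conv_lhs => rw [hA]
    rw [_root_.map_add ρ, _root_.map_add ρ, _root_.map_add ρ, _root_.map_smul ρ, _root_.map_smul ρ, _root_.map_smul ρ, _root_.map_smul ρ, hcenter,
      hUodef, hDodef, hWodef]
    simp
  -- eigenspace machinery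
  have hmemE : ∀ (m : ℤ) (v : V),
      v ∈ Module.End.eigenspace (ρ !![0, 1; -1, 0]) (I * (m:ℂ)) ↔ Wo v = (I * (m:ℂ)) • v := by
    intro m v; rw [hWodef]; exact Module.End.mem_eigenspace_iff
  -- finrank of the top eigenspace is 1
  have hfr_top : Module.finrank ℂ
      (Module.End.eigenspace (ρ !![0, 1; -1, 0]) (I * (((k:ℤ)+1 : ℤ) : ℂ))) = 1 := by
    rw [hweights ((k:ℤ)+1), if_pos]
    refine ⟨?_, by omega⟩
    rw [abs_of_nonneg (by omega : (0:ℤ) ≤ (k:ℤ)+1)]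
  haveI hfinE : FiniteDimensional ℂ
      (Module.End.eigenspace (ρ !![0, 1; -1, 0]) (I * (((k:ℤ)+1 : ℤ) : ℂ))) :=
    FiniteDimensional.of_finrank_eq_succ hfr_top
  haveI : Nontrivial (Module.End.eigenspace (ρ !![0, 1; -1, 0]) (I * (((k:ℤ)+1 : ℤ) : ℂ))) :=
    Module.nontrivial_of_finrank_pos (R := ℂ) (by rw [hfr_top]; norm_num)
  obtain ⟨vv, hvvne⟩ := exists_ne (0 : Module.End.eigenspace (ρ !![0, 1; -1, 0]) (I * (((k:ℤ)+1 : ℤ) : ℂ)))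
  obtain ⟨v0, hv0E⟩ := vv
  have hv0ne : v0 ≠ 0 := by
    intro h; exact hvvne (Subtype.ext h)
  have hWv0 : Wo v0 = (I * (((k:ℤ)+1 : ℤ) : ℂ)) • v0 := (hmemE _ _).mp hv0E
  -- every vector of the top eigenspace is a multiple of v0
  have hspan1 : ∀ w : V, Wo w = (I * (((k:ℤ)+1 : ℤ) : ℂ)) • w → ∃ c : ℂ, c • v0 = w := by
    have h1 := (finrank_eq_one_iff_of_nonzero'
      (⟨v0, hv0E⟩ : Module.End.eigenspace (ρ !![0, 1; -1, 0]) (I * (((k:ℤ)+1 : ℤ) : ℂ)))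
      (by simpa using hv0ne)).mp hfr_top
    intro w hw
    obtain ⟨c, hc⟩ := h1 ⟨w, (hmemE _ _).mpr hw⟩
    exact ⟨c, congrArg Subtype.val hc⟩
  -- the Casimir operator
  obtain ⟨Om, hOmdef⟩ : ∃ X : Module.End ℂ V,
      X = (1/2 : ℂ) • (Uo * Do + Do * Uo) - Wo * Wo := ⟨_, rfl⟩
  have hOm : ∀ v : V, Om v = (1/2 : ℂ) • (Uo (Do v) + Do (Uo v)) - Wo (Wo v) := by
    intro v; rw [hOmdef]; simp [Module.End.mul_apply]
  have hOmU : ∀ v : V, Om (Uo v) = Uo (Om v) := by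
    intro v
    rw [hOm, hOm]
    simp only [hDU, hWU, _root_.map_add, _root_.map_sub, _root_.map_smul, smul_add, smul_sub]
    module
  have hOmD : ∀ v : V, Om (Do v) = Do (Om v) := by
    intro v
    have hUD : ∀ w : V, Uo (Do w) = Do (Uo w) - (4*I) • Wo w := by
      intro w; rw [hDU w]; abel
    rw [hOm, hOm]
    simp only [hUD, hWD, _root_.map_add, _root_.map_sub, _root_.map_smul, smul_add, smul_sub]
    module
  have hOmW : ∀ v : V, Om (Wo v) = Wo (Om v) := by
    intro v
    rw [hOm, hOm]
    simp only [hWU, hWD, _root_.map_add, _root_.map_sub, _root_.map_smul, smul_add, smul_sub]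
    module
  have hOmτ : ∀ v : V, τ (Om v) = Om (τ v) := by
    intro v
    rw [hOm, hOm]
    simp only [_root_.map_sub, _root_.map_add, _root_.map_smul, _root_.map_neg, hτU, hτD, hτW]
    module
  -- the Casimir acts by a scalar μ
  have hOmv0 : Om v0 ∈ Module.End.eigenspace (ρ !![0, 1; -1, 0]) (I * (((k:ℤ)+1 : ℤ) : ℂ)) := by
    rw [hmemE]
    rw [hOm]
    -- Wo commutes with Om pointwise: use hOmW backwards
    have h1 : Wo (Om v0) = Om (Wo v0) := (hOmW v0).symm
    rw [← hOm, h1, hWv0, _root_.map_smul]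
  have hμex := hspan1 _ ((hmemE _ _).mp hOmv0)
  obtain ⟨μ, hμ⟩ := hμex
  have hOmall : ∀ v : V, Om v = μ • v := by
    have hstab : ∀ A : Matrix (Fin 2) (Fin 2) ℂ, ∀ v ∈ LinearMap.ker (Om - μ • (1 : Module.End ℂ V)),
        ρ A v ∈ LinearMap.ker (Om - μ • (1 : Module.End ℂ V)) := by
      intro A v hv
      rw [LinearMap.mem_ker, LinearMap.sub_apply, LinearMap.smul_apply, Module.End.one_apply,
        sub_eq_zero] at hv ⊢
      obtain ⟨a, b, c, habc⟩ := hρspan A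
      rw [habc, _root_.map_add, _root_.map_add, _root_.map_smul, _root_.map_smul, _root_.map_smul, hOmU, hOmD, hOmW, hv]
      simp only [_root_.map_smul]
      module
    have hstabτ : ∀ v ∈ LinearMap.ker (Om - μ • (1 : Module.End ℂ V)),
        τ v ∈ LinearMap.ker (Om - μ • (1 : Module.End ℂ V)) := by
      intro v hv
      rw [LinearMap.mem_ker, LinearMap.sub_apply, LinearMap.smul_apply, Module.End.one_apply,
        sub_eq_zero] at hv ⊢
      rw [← hOmτ, hv, _root_.map_smul]
    rcases hirred _ hstab hstabτ with h | h
    · exfalso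
      apply hv0ne
      have : v0 ∈ LinearMap.ker (Om - μ • (1 : Module.End ℂ V)) := by
        rw [LinearMap.mem_ker, LinearMap.sub_apply, LinearMap.smul_apply, Module.End.one_apply,
          sub_eq_zero, hμ]
      rw [h] at this
      simpa using this
    · intro v
      have : v ∈ LinearMap.ker (Om - μ • (1 : Module.End ℂ V)) := by rw [h]; trivial
      rw [LinearMap.mem_ker, LinearMap.sub_apply, LinearMap.smul_apply, Module.End.one_apply,
        sub_eq_zero] at this
      exact this
  -- scalar action of UD and DU on eigenvectors
  have hUDv : ∀ (m : ℂ) (v : V), Wo v = (I * m) • v →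
      Uo (Do v) = (μ - m^2 + 2*m) • v := by
    intro m v hv
    have e1 : Om v = (1/2 : ℂ) • (Uo (Do v) + Do (Uo v)) - Wo (Wo v) := hOm v
    rw [hOmall, hDU, hv] at e1
    simp only [_root_.map_smul, hv, smul_smul] at e1
    -- e1 : μ • v = (1/2)•(UoDo v + (UoDo v + (4I(Im))•v)) - ((I m)(I m))•v
    have e2 : Uo (Do v) = μ • v + ((I*m)*(I*m)) • v - (1/2 : ℂ) • ((4*I)*(I*m)) • v := by
      rw [e1]; module
    rw [e2]
    match_scalars
    linear_combination ((m:ℂ)^2 - 2*m) * Complex.I_mul_I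
  have hDUv : ∀ (m : ℂ) (v : V), Wo v = (I * m) • v →
      Do (Uo v) = (μ - m^2 - 2*m) • v := by
    intro m v hv
    rw [hDU, hUDv m v hv, hv, smul_smul]
    match_scalars
    linear_combination (4*(m:ℂ)) * Complex.I_mul_I
  -- raising/lowering on eigenvectors
  have hDlow : ∀ (m : ℂ) (v : V), Wo v = (I*m) • v → Wo (Do v) = (I*(m-2)) • Do v := by
    intro m v hv
    rw [hWD, hv, _root_.map_smul]
    match_scalars; ring
  have hUup : ∀ (m : ℂ) (v : V), Wo v = (I*m) • v → Wo (Uo v) = (I*(m+2)) • Uo v := by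
    intro m v hv
    rw [hWU, hv, _root_.map_smul]
    match_scalars; ring
  have hτflip : ∀ (m : ℂ) (v : V), Wo v = (I*m) • v → Wo (τ v) = (I*(-m)) • (τ v) := by
    intro m v hv
    have h2 := hτW v
    rw [hv, _root_.map_smul] at h2
    have h3 : Wo (τ v) = -((I*m) • τ v) := by
      have := congrArg (fun z => -z) h2
      simpa using this.symm
    rw [h3]; match_scalars; ring
  have hWv0' : Wo v0 = (I * ((k:ℂ)+1)) • v0 := by
    rw [hWv0]; norm_num
  have hcastk1 : ((((k:ℤ)-1 : ℤ)) : ℂ) = (k:ℂ) - 1 := by push_cast; ring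
  -- the Casimir scalar
  have hmu : μ = (k:ℂ)^2 - 1 := by
    by_contra hne
    have hcne : μ - (k:ℂ)^2 + 1 ≠ 0 := by
      intro h; apply hne; linear_combination h
    set Elow := Module.End.eigenspace (ρ !![0, 1; -1, 0]) (I * (((k:ℤ)-1 : ℤ) : ℂ)) with hElow
    have hfrk1 : Module.finrank ℂ Elow = 0 := by
      rw [hElow, hweights ((k:ℤ)-1), if_neg]
      rintro ⟨h1, -⟩
      rw [abs_of_nonneg (by omega : (0:ℤ) ≤ (k:ℤ)-1)] at h1
      omega
    have hmemlow : ∀ w : V, w ∈ Elow ↔ Wo w = (I * ((k:ℂ)-1)) • w := by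
      intro w
      rw [hElow, hmemE ((k:ℤ)-1) w, hcastk1]
    have hker : ∀ w ∈ Elow, Uo w = 0 → w = 0 := by
      intro w hw h0
      have h1 := hDUv ((k:ℂ)-1) w ((hmemlow w).mp hw)
      rw [h0, _root_.map_zero] at h1
      have h2 : (μ - ((k:ℂ)-1)^2 - 2*((k:ℂ)-1)) ≠ 0 := by
        intro h; apply hcne; linear_combination h
      exact (smul_eq_zero.mp h1.symm).resolve_left h2
    have hmapU : ∀ w ∈ Elow, Wo (Uo w) = (I * (((k:ℤ)+1 : ℤ) : ℂ)) • Uo w := by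
      intro w hw
      have := hUup ((k:ℂ)-1) w ((hmemlow w).mp hw)
      rw [show ((k:ℂ)-1+2) = (k:ℂ)+1 by ring] at this
      rw [this]; norm_num
    by_cases hx0 : Do v0 = 0
    · have h1 := hUDv ((k:ℂ)+1) v0 hWv0'
      rw [hx0, _root_.map_zero] at h1
      have h2 := (smul_eq_zero.mp h1.symm).resolve_right hv0ne
      apply hcne; linear_combination h2
    · have hDv0mem : Do v0 ∈ Elow := by
        rw [hmemlow]
        have := hDlow ((k:ℂ)+1) v0 hWv0'
        rwa [show ((k:ℂ)+1-2) = (k:ℂ)-1 by ring] at this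
      have hUDv0 : Uo (Do v0) = (μ - (k:ℂ)^2 + 1) • v0 := by
        have := hUDv ((k:ℂ)+1) v0 hWv0'
        rwa [show μ - ((k:ℂ)+1)^2 + 2*((k:ℂ)+1) = μ - (k:ℂ)^2+1 by ring] at this
      have hle : Elow ≤ Submodule.span ℂ {Do v0} := by
        intro w hw
        obtain ⟨c, hc⟩ := hspan1 (Uo w) (hmapU w hw)
        have hy : Uo ((μ - (k:ℂ)^2 + 1) • w - c • Do v0) = 0 := by
          rw [_root_.map_sub, _root_.map_smul, _root_.map_smul, hUDv0, ← hc]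
          module
        have h5 := hker _ (sub_mem (Submodule.smul_mem _ _ hw)
          (Submodule.smul_mem _ _ hDv0mem)) hy
        rw [sub_eq_zero] at h5
        have hw2 : w = ((μ - (k:ℂ)^2+1)⁻¹ * c) • Do v0 := by
          rw [mul_smul, ← h5, smul_smul, inv_mul_cancel₀ hcne, one_smul]
        rw [hw2]
        exact Submodule.smul_mem _ _ (Submodule.mem_span_singleton_self _)
      have heq : Elow = Submodule.span ℂ {Do v0} :=
        le_antisymm hle (by rw [Submodule.span_le, Set.singleton_subset_iff]; exact hDv0mem)
      have hone : Module.finrank ℂ Elow = 1 := by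
        rw [heq]; exact finrank_span_singleton hx0
      rw [hfrk1] at hone
      exact one_ne_zero hone.symm
  -- D v0 = 0
  have hDv0 : Do v0 = 0 := by
    by_contra hx
    have hWx : Wo (Do v0) = (I*((k:ℂ)-1)) • Do v0 := by
      have := hDlow ((k:ℂ)+1) v0 hWv0'
      rwa [show ((k:ℂ)+1-2) = (k:ℂ)-1 by ring] at this
    have hUx : Uo (Do v0) = 0 := by
      rw [hUDv ((k:ℂ)+1) v0 hWv0', hmu,
        show ((k:ℂ)^2 - 1 - ((k:ℂ)+1)^2 + 2*((k:ℂ)+1)) = 0 by ring, zero_smul]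
    obtain ⟨f, hf0, hfs⟩ : ∃ f : ℕ → V, f 0 = Do v0 ∧ ∀ j, f (j+1) = Do (f j) :=
      ⟨fun j => (⇑Do)^[j] (Do v0), rfl, fun j => Function.iterate_succ_apply' _ _ _⟩
    obtain ⟨g, hg0, hgs⟩ : ∃ g : ℕ → V, g 0 = τ (Do v0) ∧ ∀ j, g (j+1) = Uo (g j) :=
      ⟨fun j => (⇑Uo)^[j] (τ (Do v0)), rfl, fun j => Function.iterate_succ_apply' _ _ _⟩
    have hWf : ∀ j, Wo (f j) = (I*((k:ℂ)-1-2*j)) • f j := by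
      intro j; induction j with
      | zero => rw [hf0]; simpa using hWx
      | succ j ih =>
        rw [hfs]
        have := hDlow _ _ ih
        rwa [show ((k:ℂ)-1-2*j-2) = (k:ℂ)-1-2*(j+1:ℕ) by push_cast; ring] at this
    have hWg : ∀ j, Wo (g j) = (I*(-((k:ℂ)-1)+2*j)) • g j := by
      intro j; induction j with
      | zero =>
        rw [hg0]
        have := hτflip _ _ hWx
        rwa [show (-((k:ℂ)-1)) = -((k:ℂ)-1)+2*(0:ℕ) by push_cast; ring] at this
      | succ j ih =>
        rw [hgs]
        have := hUup _ _ ih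
        rwa [show (-((k:ℂ)-1)+2*j+2) = -((k:ℂ)-1)+2*(j+1:ℕ) by push_cast; ring] at this
    have hτf : ∀ j, τ (f j) = g j := by
      intro j; induction j with
      | zero => rw [hf0, hg0]
      | succ j ih => rw [hfs, hτD, ih, hgs]
    have hτg : ∀ j, τ (g j) = f j := by
      intro j; rw [← hτf, hτ2]
    have hUf : ∀ j, Uo (f (j+1)) = (μ - ((k:ℂ)-1-2*j)^2 + 2*((k:ℂ)-1-2*j)) • f j := by
      intro j; rw [hfs]; exact hUDv _ _ (hWf j)
    have hDg : ∀ j, Do (g (j+1)) = (μ - (-((k:ℂ)-1)+2*j)^2 - 2*(-((k:ℂ)-1)+2*j)) • g j := by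
      intro j; rw [hgs]; exact hDUv _ _ (hWg j)
    have hDg0 : Do (g 0) = 0 := by
      rw [hg0, ← hτU, hUx, _root_.map_zero]
    set L := Submodule.span ℂ (Set.range f ∪ Set.range g) with hL
    have hmemf : ∀ j, f j ∈ L := fun j => Submodule.subset_span (Or.inl ⟨j, rfl⟩)
    have hmemg : ∀ j, g j ∈ L := fun j => Submodule.subset_span (Or.inr ⟨j, rfl⟩)
    have hLU : ∀ v ∈ L, Uo v ∈ L := by
      intro v hv
      have hle : L ≤ Submodule.comap Uo L := by
        rw [hL, Submodule.span_le]
        rintro w (⟨j, rfl⟩ | ⟨j, rfl⟩)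
        · rcases j with _ | j
          · simp only [SetLike.mem_coe, Submodule.mem_comap, hf0]; rw [hUx]; exact L.zero_mem
          · simp only [SetLike.mem_coe, Submodule.mem_comap]; rw [hUf j]; exact L.smul_mem _ (hmemf j)
        · simp only [SetLike.mem_coe, Submodule.mem_comap]; rw [← hgs]; exact hmemg (j+1)
      exact hle hv
    have hLD : ∀ v ∈ L, Do v ∈ L := by
      intro v hv
      have hle : L ≤ Submodule.comap Do L := by
        rw [hL, Submodule.span_le]
        rintro w (⟨j, rfl⟩ | ⟨j, rfl⟩)
        · simp only [SetLike.mem_coe, Submodule.mem_comap]; rw [← hfs]; exact hmemf (j+1)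
        · rcases j with _ | j
          · simp only [SetLike.mem_coe, Submodule.mem_comap]; rw [hDg0]; exact L.zero_mem
          · simp only [SetLike.mem_coe, Submodule.mem_comap]; rw [hDg j]; exact L.smul_mem _ (hmemg j)
      exact hle hv
    have hLW : ∀ v ∈ L, Wo v ∈ L := by
      intro v hv
      have hle : L ≤ Submodule.comap Wo L := by
        rw [hL, Submodule.span_le]
        rintro w (⟨j, rfl⟩ | ⟨j, rfl⟩)
        · simp only [SetLike.mem_coe, Submodule.mem_comap]; rw [hWf j]; exact L.smul_mem _ (hmemf j)
        · simp only [SetLike.mem_coe, Submodule.mem_comap]; rw [hWg j]; exact L.smul_mem _ (hmemg j)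
      exact hle hv
    have hLτ : ∀ v ∈ L, τ v ∈ L := by
      intro v hv
      have hle : L ≤ Submodule.comap (τ : V →ₗ[ℂ] V) L := by
        rw [hL, Submodule.span_le]
        rintro w (⟨j, rfl⟩ | ⟨j, rfl⟩)
        · simp only [SetLike.mem_coe, Submodule.mem_comap, LinearEquiv.coe_coe]; rw [hτf j]; exact hmemg j
        · simp only [SetLike.mem_coe, Submodule.mem_comap, LinearEquiv.coe_coe]; rw [hτg j]; exact hmemf j
      exact hle hv
    have hLρ : ∀ A : Matrix (Fin 2) (Fin 2) ℂ, ∀ v ∈ L, ρ A v ∈ L := by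
      intro A v hv
      obtain ⟨a, b, c, h⟩ := hρspan A
      rw [h]
      exact add_mem (add_mem (L.smul_mem _ (hLU v hv)) (L.smul_mem _ (hLD v hv)))
        (L.smul_mem _ (hLW v hv))
    rcases hirred L hLρ hLτ with hbad | htop
    · apply hx
      have : f 0 ∈ (⊥ : Submodule ℂ V) := hbad ▸ hmemf 0
      rw [hf0] at this; simpa using this
    -- v0 lies in the big sup
    have hv0L : v0 ∈ L := htop ▸ Submodule.mem_top
    have hsub : L ≤ (⨆ (c : ℂ) (_ : c ≠ I * (((k:ℤ)+1 : ℤ) : ℂ)), Module.End.eigenspace Wo c)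
        ⊔ Submodule.span ℂ {g k} := by
      rw [hL, Submodule.span_le]
      rintro w (⟨j, rfl⟩ | ⟨j, rfl⟩) <;> simp only [SetLike.mem_coe]
      · apply Submodule.mem_sup_left
        have hne : (I*((k:ℂ)-1-2*j)) ≠ I * (((k:ℤ)+1 : ℤ) : ℂ) := by
          intro h
          have h2 : ((k:ℂ)-1-2*j) = (((k:ℤ)+1 : ℤ) : ℂ) :=
            mul_left_cancel₀ Complex.I_ne_zero h
          have h3 : ((2*j+2 : ℕ) : ℂ) = 0 := by push_cast; push_cast at h2; linear_combination -h2
          have h4 := Nat.cast_eq_zero.mp h3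
          omega
        exact Submodule.mem_iSup_of_mem _ (Submodule.mem_iSup_of_mem hne
          (Module.End.mem_eigenspace_iff.mpr (hWf j)))
      · by_cases hj : j = k
        · subst hj
          exact Submodule.mem_sup_right (Submodule.subset_span rfl)
        · apply Submodule.mem_sup_left
          have hne : (I*(-((k:ℂ)-1)+2*j)) ≠ I * (((k:ℤ)+1 : ℤ) : ℂ) := by
            intro h
            have h2 : (-((k:ℂ)-1)+2*j) = (((k:ℤ)+1 : ℤ) : ℂ) :=
              mul_left_cancel₀ Complex.I_ne_zero h
            push_cast at h2
            have h3 : ((2*j : ℕ) : ℂ) = ((2*k : ℕ) : ℂ) := by push_cast; linear_combination h2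
            have h4 := Nat.cast_injective h3
            omega
          exact Submodule.mem_iSup_of_mem _ (Submodule.mem_iSup_of_mem hne
            (Module.End.mem_eigenspace_iff.mpr (hWg j)))
    obtain ⟨s, hs, t, ht, hst⟩ := Submodule.mem_sup.mp (hsub hv0L)
    obtain ⟨a, rfl⟩ := Submodule.mem_span_singleton.mp ht
    have hgk : g k ∈ Module.End.eigenspace Wo (I * (((k:ℤ)+1 : ℤ) : ℂ)) := by
      refine Module.End.mem_eigenspace_iff.mpr ?_
      have := hWg k
      rwa [show (-((k:ℂ)-1)+2*(k:ℕ)) = (((k:ℤ)+1 : ℤ) : ℂ) by push_cast; ring] at this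
    have hv0E' : v0 ∈ Module.End.eigenspace Wo (I * (((k:ℤ)+1 : ℤ) : ℂ)) :=
      Module.End.mem_eigenspace_iff.mpr hWv0
    have hsE : s ∈ Module.End.eigenspace Wo (I * (((k:ℤ)+1 : ℤ) : ℂ)) := by
      have : s = v0 - a • g k := by rw [← hst]; abel
      rw [this]
      exact sub_mem hv0E' (Submodule.smul_mem _ _ hgk)
    have hs0 : s = 0 := by
      have hdisj := Module.End.eigenspaces_iSupIndep Wo (I * (((k:ℤ)+1 : ℤ) : ℂ))
      exact Submodule.disjoint_def.mp hdisj s hsE hs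
    have hv0gk : v0 = a • g k := by rw [← hst, hs0, zero_add]
    have hDgk : Do (g k) = 0 := by
      have h1 := hDg (k-1)
      rw [show (k-1)+1 = k from by omega] at h1
      have hc : ((k-1 : ℕ) : ℂ) = (k:ℂ) - 1 := by
        push_cast [Nat.cast_sub hk]; ring
      rw [h1, hc, hmu, show ((k:ℂ)^2-1 - (-((k:ℂ)-1)+2*((k:ℂ)-1))^2
        - 2*(-((k:ℂ)-1)+2*((k:ℂ)-1))) = 0 by ring, zero_smul]
    apply hx
    have := congrArg (fun w => Do w) hv0gk
    simpa [hDgk] using this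
  -- the chains p and q
  obtain ⟨p, hp0, hps⟩ : ∃ p : ℕ → V, p 0 = v0 ∧ ∀ n, p (n+1) = Uo (p n) :=
    ⟨fun n => (⇑Uo)^[n] v0, rfl, fun n => Function.iterate_succ_apply' _ _ _⟩
  obtain ⟨q, hq⟩ : ∃ q : ℕ → V, ∀ n, q n = τ (p n) := ⟨_, fun _ => rfl⟩
  obtain ⟨del, hdel⟩ : ∃ d : ℕ → ℂ, ∀ n, d n = -4*((n:ℂ)+1)*((n:ℂ)+(k:ℂ)+1) :=
    ⟨_, fun _ => rfl⟩
  have hdelne : ∀ n, del n ≠ 0 := by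
    intro n h
    rw [hdel] at h
    have h1 : ((n:ℂ)+1) ≠ 0 := Nat.cast_add_one_ne_zero n
    have h2 : ((n:ℂ)+(k:ℂ)+1) ≠ 0 := by
      have h3 : ((n+k+1 : ℕ) : ℂ) ≠ 0 := Nat.cast_ne_zero.mpr (by omega)
      intro hz; apply h3; push_cast; linear_combination hz
    have := mul_eq_zero.mp h
    rcases this with h4 | h4
    · rcases mul_eq_zero.mp h4 with h5 | h5
      · norm_num at h5
      · exact h1 h5
    · exact h2 h4
  have hDp0 : Do (p 0) = 0 := by rw [hp0]; exact hDv0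
  have hWp : ∀ n, Wo (p n) = (I*((k:ℂ)+1+2*n)) • p n := by
    intro n; induction n with
    | zero => rw [hp0]; simpa using hWv0'
    | succ n ih =>
      rw [hps]
      have := hUup _ _ ih
      rwa [show ((k:ℂ)+1+2*n+2) = (k:ℂ)+1+2*(n+1:ℕ) by push_cast; ring] at this
  have hDp : ∀ n, Do (p (n+1)) = del n • p n := by
    intro n
    rw [hps, hDUv _ _ (hWp n)]
    congr 1
    rw [hdel, hmu]; ring
  have hpne : ∀ n, p n ≠ 0 := by
    intro n
    induction n with
    | zero => rw [hp0]; exact hv0ne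
    | succ n ih =>
      intro h
      have := hDp n
      rw [h, _root_.map_zero] at this
      exact ih ((smul_eq_zero.mp this.symm).resolve_left (hdelne n))
  have hWq : ∀ n, Wo (q n) = (I*(-((k:ℂ)+1+2*n))) • q n := by
    intro n; rw [hq]; exact hτflip _ _ (hWp n)
  have hqne : ∀ n, q n ≠ 0 := by
    intro n h
    rw [hq] at h
    exact hpne n ((LinearEquiv.map_eq_zero_iff τ).mp h)
  have hUq0 : Uo (q 0) = 0 := by
    rw [hq, hp0, ← hτD, hDv0, _root_.map_zero]
  have hUq : ∀ n, Uo (q (n+1)) = del n • q n := by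
    intro n
    rw [hq, hq, ← hτD, hDp n, _root_.map_smul]
  have hDq : ∀ n, Do (q n) = q (n+1) := by
    intro n
    rw [hq, hq, hps, ← hτU]
  -- the basis of V given by the two chains
  obtain ⟨bb, hbl, hbr⟩ : ∃ b : ℕ ⊕ ℕ → V,
      (∀ n, b (Sum.inl n) = p n) ∧ (∀ n, b (Sum.inr n) = q n) :=
    ⟨Sum.elim p q, fun _ => rfl, fun _ => rfl⟩
  have hli : LinearIndependent ℂ bb := by
    refine Module.End.eigenvectors_linearIndependent' Wo
      (Sum.elim (fun n : ℕ => I*((k:ℂ)+1+2*n)) (fun n : ℕ => I*(-((k:ℂ)+1+2*n)))) ?_ bb ?_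
    · intro i j h
      have hI := Complex.I_ne_zero
      cases i with
      | inl a => cases j with
        | inl b =>
          simp only [Sum.elim_inl] at h
          have h2 := mul_left_cancel₀ hI h
          have h3 : ((a:ℕ) : ℂ) = ((b:ℕ) : ℂ) := by linear_combination h2/2
          exact congrArg Sum.inl (Nat.cast_injective h3)
        | inr b =>
          simp only [Sum.elim_inl, Sum.elim_inr] at h
          have h2 := mul_left_cancel₀ hI h
          have h3 : ((2*a+2*b+2*k+2 : ℕ) : ℂ) = 0 := by push_cast; linear_combination h2
          exact absurd (Nat.cast_eq_zero.mp h3) (by omega)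
      | inr a => cases j with
        | inl b =>
          simp only [Sum.elim_inl, Sum.elim_inr] at h
          have h2 := mul_left_cancel₀ hI h
          have h3 : ((2*a+2*b+2*k+2 : ℕ) : ℂ) = 0 := by push_cast; linear_combination -h2
          exact absurd (Nat.cast_eq_zero.mp h3) (by omega)
        | inr b =>
          simp only [Sum.elim_inr] at h
          have h2 := mul_left_cancel₀ hI h
          have h3 : ((a:ℕ) : ℂ) = ((b:ℕ) : ℂ) := by linear_combination -h2/2
          exact congrArg Sum.inr (Nat.cast_injective h3)
    · intro i
      cases i with
      | inl n =>
        exact ⟨Module.End.mem_eigenspace_iff.mpr (by rw [hbl]; exact hWp n),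
          by rw [hbl]; exact hpne n⟩
      | inr n =>
        exact ⟨Module.End.mem_eigenspace_iff.mpr (by rw [hbr]; exact hWq n),
          by rw [hbr]; exact hqne n⟩
  have htop : ⊤ ≤ Submodule.span ℂ (Set.range bb) := by
    set T := Submodule.span ℂ (Set.range bb) with hT
    have hmemp : ∀ n, p n ∈ T := fun n => Submodule.subset_span ⟨Sum.inl n, hbl n⟩
    have hmemq : ∀ n, q n ∈ T := fun n => Submodule.subset_span ⟨Sum.inr n, hbr n⟩
    have hTU : ∀ v ∈ T, Uo v ∈ T := by
      intro v hv
      have hle : T ≤ Submodule.comap Uo T := by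
        rw [hT, Submodule.span_le]
        rintro w ⟨i, rfl⟩
        cases i with
        | inl n =>
          simp only [SetLike.mem_coe, Submodule.mem_comap, hbl]
          rw [← hps]; exact hmemp (n+1)
        | inr n =>
          simp only [SetLike.mem_coe, Submodule.mem_comap, hbr]
          rcases n with _ | n
          · rw [hUq0]; exact T.zero_mem
          · rw [hUq n]; exact T.smul_mem _ (hmemq n)
      exact hle hv
    have hTD : ∀ v ∈ T, Do v ∈ T := by
      intro v hv
      have hle : T ≤ Submodule.comap Do T := by
        rw [hT, Submodule.span_le]
        rintro w ⟨i, rfl⟩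
        cases i with
        | inl n =>
          simp only [SetLike.mem_coe, Submodule.mem_comap, hbl]
          rcases n with _ | n
          · rw [hDp0]; exact T.zero_mem
          · rw [hDp n]; exact T.smul_mem _ (hmemp n)
        | inr n =>
          simp only [SetLike.mem_coe, Submodule.mem_comap, hbr]
          rw [hDq]; exact hmemq (n+1)
      exact hle hv
    have hTW : ∀ v ∈ T, Wo v ∈ T := by
      intro v hv
      have hle : T ≤ Submodule.comap Wo T := by
        rw [hT, Submodule.span_le]
        rintro w ⟨i, rfl⟩
        cases i with
        | inl n =>
          simp only [SetLike.mem_coe, Submodule.mem_comap, hbl]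
          rw [hWp n]; exact T.smul_mem _ (hmemp n)
        | inr n =>
          simp only [SetLike.mem_coe, Submodule.mem_comap, hbr]
          rw [hWq n]; exact T.smul_mem _ (hmemq n)
      exact hle hv
    have hTτ : ∀ v ∈ T, τ v ∈ T := by
      intro v hv
      have hle : T ≤ Submodule.comap (τ : V →ₗ[ℂ] V) T := by
        rw [hT, Submodule.span_le]
        rintro w ⟨i, rfl⟩
        cases i with
        | inl n =>
          simp only [SetLike.mem_coe, Submodule.mem_comap, LinearEquiv.coe_coe, hbl]
          rw [← hq]; exact hmemq n
        | inr n =>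
          simp only [SetLike.mem_coe, Submodule.mem_comap, LinearEquiv.coe_coe, hbr]
          rw [hq, hτ2]; exact hmemp n
      exact hle hv
    have hTρ : ∀ A : Matrix (Fin 2) (Fin 2) ℂ, ∀ v ∈ T, ρ A v ∈ T := by
      intro A v hv
      obtain ⟨a, b, c, h⟩ := hρspan A
      rw [h]
      exact add_mem (add_mem (T.smul_mem _ (hTU v hv)) (T.smul_mem _ (hTD v hv)))
        (T.smul_mem _ (hTW v hv))
    rcases hirred T hTρ hTτ with h | h
    · exfalso
      apply hv0ne
      have : p 0 ∈ (⊥ : Submodule ℂ V) := h ▸ hmemp 0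
      rw [hp0] at this; simpa using this
    · exact h.ge
  -- functionals
  obtain ⟨B, hB⟩ : ∃ B : Module.Basis (ℕ ⊕ ℕ) ℂ V, ∀ i, B i = bb i :=
    ⟨Module.Basis.mk hli htop, fun i => Module.Basis.mk_apply hli htop i⟩
  obtain ⟨ψ₁, hψ₁⟩ : ∃ ψ : V →ₗ[ℂ] ℂ,
      ∀ i, ψ (B i) = Sum.elim (fun n => JMDaux.lam k n) (fun _ => (0:ℂ)) i :=
    ⟨B.constr ℂ _, fun i => B.constr_basis ℂ _ i⟩
  obtain ⟨ψ₂, hψ₂⟩ : ∃ ψ : V →ₗ[ℂ] ℂ,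
      ∀ i, ψ (B i) = Sum.elim (fun _ => (0:ℂ)) (fun n => JMDaux.lam k n) i :=
    ⟨B.constr ℂ _, fun i => B.constr_basis ℂ _ i⟩
  have hψ₁p : ∀ n, ψ₁ (p n) = JMDaux.lam k n := by
    intro n; have := hψ₁ (Sum.inl n); rwa [hB, hbl] at this
  have hψ₁q : ∀ n, ψ₁ (q n) = 0 := by
    intro n; have := hψ₁ (Sum.inr n); rwa [hB, hbr] at this
  have hψ₂p : ∀ n, ψ₂ (p n) = 0 := by
    intro n; have := hψ₂ (Sum.inl n); rwa [hB, hbl] at this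
  have hψ₂q : ∀ n, ψ₂ (q n) = JMDaux.lam k n := by
    intro n; have := hψ₂ (Sum.inr n); rwa [hB, hbr] at this
  -- action of Eo on the basis
  have hEp0 : Eo (p 0) = ((I*((k:ℂ)+1))/2) • p 0 - (I/4) • p 1 := by
    rw [hEo, hDp0, hWp 0, ← hps 0]
    match_scalars <;> push_cast <;> ring
  have hEp : ∀ n, Eo (p (n+1)) = ((I*((k:ℂ)+3+2*n))/2) • p (n+1)
      + (I/4*del n) • p n - (I/4) • p (n+2) := by
    intro n
    rw [hEo, hWp (n+1), hDp n, ← hps (n+1)]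
    match_scalars <;> push_cast <;> ring
  have hEq0 : Eo (q 0) = (-(I*((k:ℂ)+1))/2) • q 0 + (I/4) • q 1 := by
    rw [hEo, hWq 0, hDq 0, hUq0]
    match_scalars <;> push_cast <;> ring
  have hEq : ∀ n, Eo (q (n+1)) = (-(I*((k:ℂ)+3+2*n))/2) • q (n+1)
      - (I/4*del n) • q n + (I/4) • q (n+2) := by
    intro n
    rw [hEo, hWq (n+1), hDq (n+1), hUq n]
    match_scalars <;> push_cast <;> ring
  -- the functionals kill the range of Eo
  have hψ₁E : ∀ v : V, ψ₁ (Eo v) = 0 := by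
    have hcomp : ψ₁ ∘ₗ (Eo : V →ₗ[ℂ] V) = 0 := by
      apply Module.Basis.ext B
      intro i
      rw [LinearMap.comp_apply, LinearMap.zero_apply, hB]
      cases i with
      | inl n =>
        rw [hbl]
        rcases n with _ | n
        · rw [hEp0, _root_.map_sub, _root_.map_smul, _root_.map_smul, hψ₁p, hψ₁p,
            JMDaux.lam_succ, JMDaux.lam_zero]
          simp only [smul_eq_mul]
          push_cast
          ring
        · rw [hEp n, _root_.map_sub, _root_.map_add, _root_.map_smul, _root_.map_smul,
            _root_.map_smul, hψ₁p, hψ₁p, hψ₁p, JMDaux.lam_succ k (n+1), JMDaux.lam_succ k n,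
            hdel]
          simp only [smul_eq_mul]
          push_cast
          ring
      | inr n =>
        rw [hbr]
        rcases n with _ | n
        · rw [hEq0, _root_.map_add, _root_.map_smul, _root_.map_smul, hψ₁q, hψ₁q]
          simp only [smul_eq_mul]
          ring
        · rw [hEq n, _root_.map_add, _root_.map_sub, _root_.map_smul, _root_.map_smul,
            _root_.map_smul, hψ₁q, hψ₁q, hψ₁q]
          simp only [smul_eq_mul]
          ring
    intro v
    exact LinearMap.ext_iff.mp hcomp v
  have hψ₂E : ∀ v : V, ψ₂ (Eo v) = 0 := by
    have hcomp : ψ₂ ∘ₗ (Eo : V →ₗ[ℂ] V) = 0 := by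
      apply Module.Basis.ext B
      intro i
      rw [LinearMap.comp_apply, LinearMap.zero_apply, hB]
      cases i with
      | inl n =>
        rw [hbl]
        rcases n with _ | n
        · rw [hEp0, _root_.map_sub, _root_.map_smul, _root_.map_smul, hψ₂p, hψ₂p]
          simp only [smul_eq_mul]
          ring
        · rw [hEp n, _root_.map_sub, _root_.map_add, _root_.map_smul, _root_.map_smul,
            _root_.map_smul, hψ₂p, hψ₂p, hψ₂p]
          simp only [smul_eq_mul]
          ring
      | inr n =>
        rw [hbr]
        rcases n with _ | n
        · rw [hEq0, _root_.map_add, _root_.map_smul, _root_.map_smul, hψ₂q, hψ₂q,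
            JMDaux.lam_succ, JMDaux.lam_zero]
          simp only [smul_eq_mul]
          push_cast
          ring
        · rw [hEq n, _root_.map_add, _root_.map_sub, _root_.map_smul, _root_.map_smul,
            _root_.map_smul, hψ₂q, hψ₂q, hψ₂q, JMDaux.lam_succ k (n+1), JMDaux.lam_succ k n,
            hdel]
          simp only [smul_eq_mul]
          push_cast
          ring
    intro v
    exact LinearMap.ext_iff.mp hcomp v
  have hψ₁N : ∀ w ∈ N, ψ₁ w = 0 := by
    rintro w ⟨v, rfl⟩; exact hψ₁E v
  have hψ₂N : ∀ w ∈ N, ψ₂ w = 0 := by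
    rintro w ⟨v, rfl⟩; exact hψ₂E v
  -- membership of p n, q n modulo N
  have hJp : ∀ n, p n - JMDaux.lam k n • p 0 ∈ N := by
    have key : ∀ n, (p n - JMDaux.lam k n • p 0 ∈ N) ∧
        (p (n+1) - JMDaux.lam k (n+1) • p 0 ∈ N) := by
      intro n
      induction n with
      | zero =>
        constructor
        · rw [JMDaux.lam_zero, one_smul, sub_self]; exact N.zero_mem
        · have hkey : p 1 - JMDaux.lam k 1 • p 0 = (4*I) • Eo (p 0) := by
            rw [hEp0, JMDaux.lam_succ, JMDaux.lam_zero]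
            match_scalars <;> (try push_cast) <;> ring_nf <;> (try simp only [Complex.I_sq]) <;> (try push_cast) <;> try ring
          rw [hkey]
          exact N.smul_mem _ (LinearMap.mem_range_self _ _)
      | succ n ih =>
        refine ⟨ih.2, ?_⟩
        have hkey : p (n+2) - JMDaux.lam k (n+2) • p 0
            = (2*((k:ℂ)+3+2*n)) • (p (n+1) - JMDaux.lam k (n+1) • p 0)
              + del n • (p n - JMDaux.lam k n • p 0) + (4*I) • Eo (p (n+1)) := by
          rw [hEp n, hdel, JMDaux.lam_succ k (n+1), JMDaux.lam_succ k n]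
          match_scalars <;> (try push_cast) <;> ring_nf <;> (try simp only [Complex.I_sq]) <;> (try push_cast) <;> try ring
        rw [hkey]
        exact add_mem (add_mem (N.smul_mem _ ih.2) (N.smul_mem _ ih.1))
          (N.smul_mem _ (LinearMap.mem_range_self _ _))
    exact fun n => (key n).1
  have hJq : ∀ n, q n - JMDaux.lam k n • q 0 ∈ N := by
    have key : ∀ n, (q n - JMDaux.lam k n • q 0 ∈ N) ∧
        (q (n+1) - JMDaux.lam k (n+1) • q 0 ∈ N) := by
      intro n
      induction n with
      | zero =>
        constructor
        · rw [JMDaux.lam_zero, one_smul, sub_self]; exact N.zero_mem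
        · have hkey : q 1 - JMDaux.lam k 1 • q 0 = (-(4*I)) • Eo (q 0) := by
            rw [hEq0, JMDaux.lam_succ, JMDaux.lam_zero]
            match_scalars <;> (try push_cast) <;> ring_nf <;> (try simp only [Complex.I_sq]) <;> (try push_cast) <;> try ring
          rw [hkey]
          exact N.smul_mem _ (LinearMap.mem_range_self _ _)
      | succ n ih =>
        refine ⟨ih.2, ?_⟩
        have hkey : q (n+2) - JMDaux.lam k (n+2) • q 0
            = (2*((k:ℂ)+3+2*n)) • (q (n+1) - JMDaux.lam k (n+1) • q 0)
              + del n • (q n - JMDaux.lam k n • q 0) + (-(4*I)) • Eo (q (n+1)) := by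
          rw [hEq n, hdel, JMDaux.lam_succ k (n+1), JMDaux.lam_succ k n]
          match_scalars <;> (try push_cast) <;> ring_nf <;> (try simp only [Complex.I_sq]) <;> (try push_cast) <;> try ring
        rw [hkey]
        exact add_mem (add_mem (N.smul_mem _ ih.2) (N.smul_mem _ ih.1))
          (N.smul_mem _ (LinearMap.mem_range_self _ _))
    exact fun n => (key n).1
  -- general reduction modulo N
  have hJall : ∀ v : V, v - ψ₁ v • p 0 - ψ₂ v • q 0 ∈ N := by
    intro v
    have hle : Submodule.span ℂ (Set.range bb) ≤ Submodule.comap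
        (LinearMap.id - LinearMap.smulRight ψ₁ (p 0) - LinearMap.smulRight ψ₂ (q 0)) N := by
      rw [Submodule.span_le]
      rintro w ⟨i, rfl⟩
      simp only [SetLike.mem_coe, Submodule.mem_comap, LinearMap.sub_apply,
        LinearMap.id_apply, LinearMap.smulRight_apply]
      cases i with
      | inl n =>
        rw [hbl, hψ₁p, hψ₂p, zero_smul, sub_zero]
        exact hJp n
      | inr n =>
        rw [hbr, hψ₁q, hψ₂q, zero_smul, sub_zero]
        exact hJq n
    have h2 := hle (htop (Submodule.mem_top : v ∈ ⊤))
    simpa only [Submodule.mem_comap, LinearMap.sub_apply, LinearMap.id_apply,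
      LinearMap.smulRight_apply] using h2
  -- Goal 1 : the quotient has dimension 2
  have hker : LinearMap.ker (ψ₁.prod ψ₂) = N := by
    ext v
    simp only [LinearMap.mem_ker, LinearMap.prod_apply, Function.prod, Prod.mk_eq_zero]
    constructor
    · rintro ⟨h1, h2⟩
      have := hJall v
      rwa [h1, h2, zero_smul, zero_smul, sub_zero, sub_zero] at this
    · intro hv; exact ⟨hψ₁N v hv, hψ₂N v hv⟩
  have hsurj : Function.Surjective (ψ₁.prod ψ₂) := by
    intro z
    refine ⟨z.1 • p 0 + z.2 • q 0, ?_⟩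
    have e : (ψ₁.prod ψ₂) (z.1 • p 0 + z.2 • q 0)
        = (ψ₁ (z.1 • p 0 + z.2 • q 0), ψ₂ (z.1 • p 0 + z.2 • q 0)) := rfl
    rw [e]
    rw [_root_.map_add, _root_.map_add, _root_.map_smul, _root_.map_smul,
      _root_.map_smul, _root_.map_smul, hψ₁p, hψ₁q, hψ₂p, hψ₂q, JMDaux.lam_zero]
    simp
  have hquot : Module.finrank ℂ (V ⧸ N) = 2 := by
    rw [← hker]
    have e := (ψ₁.prod ψ₂).quotKerEquivOfSurjective hsurj
    rw [e.finrank_eq]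
    simp [Module.finrank_prod]
  -- Goal 2 : torus action on the quotient
  have hH : ∀ v : V, ρ !![1,0;0,0] v = (1/4 : ℂ) • (Uo v + Do v) := by
    intro v
    have hA : (!![1,0;0,0] : Matrix (Fin 2) (Fin 2) ℂ)
        = (1/2 : ℂ) • 1 + (1/4 : ℂ) • !![1,I;I,-1] + (1/4 : ℂ) • !![1,-I;-I,-1] := by
      ext i j; fin_cases i <;> fin_cases j <;> simp [Matrix.one_apply] <;> ring
    conv_lhs => rw [hA]
    rw [_root_.map_add ρ, _root_.map_add ρ, _root_.map_smul ρ, _root_.map_smul ρ, _root_.map_smul ρ, hcenter,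
      hUodef, hDodef]
    simp only [LinearMap.add_apply, LinearMap.smul_apply, LinearMap.zero_apply, smul_zero,
      zero_add]
    module
  have hG2 : ∀ v : V, ρ !![1,0;0,0] v - (((k:ℂ)+1)/2) • v ∈ N := by
    intro v
    have hle : Submodule.span ℂ (Set.range bb) ≤ Submodule.comap
        ((ρ !![1,0;0,0] : Module.End ℂ V) - (((k:ℂ)+1)/2) • (1 : Module.End ℂ V)) N := by
      rw [Submodule.span_le]
      rintro w ⟨i, rfl⟩
      simp only [SetLike.mem_coe, Submodule.mem_comap, LinearMap.sub_apply,
        LinearMap.smul_apply, Module.End.one_apply]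
      cases i with
      | inl n =>
        rw [hbl]
        rcases n with _ | n
        · have e : ρ !![1,0;0,0] (p 0) - (((k:ℂ)+1)/2) • (p 0)
              = (1/4 : ℂ) • (p 1 - JMDaux.lam k 1 • p 0) := by
            rw [hH, ← hps 0, hDp0, JMDaux.lam_succ, JMDaux.lam_zero]
            match_scalars <;> push_cast <;> ring
          rw [e]
          exact N.smul_mem _ (hJp 1)
        · have e : ρ !![1,0;0,0] (p (n+1)) - (((k:ℂ)+1)/2) • (p (n+1))
              = (1/4 : ℂ) • (p (n+2) - JMDaux.lam k (n+2) • p 0)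
                + (del n/4) • (p n - JMDaux.lam k n • p 0)
                - (((k:ℂ)+1)/2) • (p (n+1) - JMDaux.lam k (n+1) • p 0) := by
            rw [hH, ← hps (n+1), hDp n, hdel, JMDaux.lam_succ k (n+1), JMDaux.lam_succ k n]
            match_scalars <;> push_cast <;> ring
          rw [e]
          exact sub_mem (add_mem (N.smul_mem _ (hJp (n+2))) (N.smul_mem _ (hJp n)))
            (N.smul_mem _ (hJp (n+1)))
      | inr n =>
        rw [hbr]
        rcases n with _ | n
        · have e : ρ !![1,0;0,0] (q 0) - (((k:ℂ)+1)/2) • (q 0)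
              = (1/4 : ℂ) • (q 1 - JMDaux.lam k 1 • q 0) := by
            rw [hH, hUq0, hDq 0, JMDaux.lam_succ, JMDaux.lam_zero]
            match_scalars <;> push_cast <;> ring
          rw [e]
          exact N.smul_mem _ (hJq 1)
        · have e : ρ !![1,0;0,0] (q (n+1)) - (((k:ℂ)+1)/2) • (q (n+1))
              = (1/4 : ℂ) • (q (n+2) - JMDaux.lam k (n+2) • q 0)
                + (del n/4) • (q n - JMDaux.lam k n • q 0)
                - (((k:ℂ)+1)/2) • (q (n+1) - JMDaux.lam k (n+1) • q 0) := by
            rw [hH, hUq n, hDq (n+1), hdel, JMDaux.lam_succ k (n+1), JMDaux.lam_succ k n]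
            match_scalars <;> push_cast <;> ring
          rw [e]
          exact sub_mem (add_mem (N.smul_mem _ (hJq (n+2))) (N.smul_mem _ (hJq n)))
            (N.smul_mem _ (hJq (n+1)))
    have h2 := hle (htop (Submodule.mem_top : v ∈ ⊤))
    simpa only [Submodule.mem_comap, LinearMap.sub_apply, LinearMap.smul_apply,
      Module.End.one_apply] using h2
  -- Goal 3
  have hsum0 : ∀ v : V, ρ !![0,0;0,1] v = - ρ !![1,0;0,0] v := by
    intro v
    have hA : (!![0,0;0,1] : Matrix (Fin 2) (Fin 2) ℂ) = 1 - !![1,0;0,0] := by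
      ext i j; fin_cases i <;> fin_cases j <;> simp [Matrix.one_apply]
    rw [hA, _root_.map_sub ρ, hcenter]
    simp
  have hG3 : ∀ v : V, ρ !![0,0;0,1] v + (((k:ℂ)+1)/2) • v ∈ N := by
    intro v
    have e : ρ !![0,0;0,1] v + (((k:ℂ)+1)/2) • v
        = -(ρ !![1,0;0,0] v - (((k:ℂ)+1)/2) • v) := by
      rw [hsum0]; abel
    rw [e]
    exact N.neg_mem (hG2 v)
  -- Goal 4
  have hτp0 : τ (p 0) = q 0 := (hq 0).symm
  have hτq0 : τ (q 0) = p 0 := by rw [hq]; exact hτ2 _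
  have hG4 : (Submodule.span ℂ {p 0 + q 0, p 0 - q 0} ⊔ N = ⊤) ∧
      (∀ a b : ℂ, a • (p 0 + q 0) + b • (p 0 - q 0) ∈ N → a = 0 ∧ b = 0) ∧
      τ (p 0 + q 0) - (p 0 + q 0) ∈ N ∧ τ (p 0 - q 0) + (p 0 - q 0) ∈ N := by
    refine ⟨?_, ?_, ?_, ?_⟩
    · have h1 : p 0 + q 0 ∈ Submodule.span ℂ {p 0 + q 0, p 0 - q 0} :=
        Submodule.subset_span (Set.mem_insert _ _)
      have h2 : p 0 - q 0 ∈ Submodule.span ℂ {p 0 + q 0, p 0 - q 0} :=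
        Submodule.subset_span (Set.mem_insert_of_mem _ rfl)
      have hp0mem : p 0 ∈ Submodule.span ℂ {p 0 + q 0, p 0 - q 0} := by
        have e : p 0 = (1/2 : ℂ) • ((p 0 + q 0) + (p 0 - q 0)) := by module
        have h3 := Submodule.smul_mem _ ((1:ℂ)/2) (add_mem h1 h2)
        rwa [← e] at h3
      have hq0mem : q 0 ∈ Submodule.span ℂ {p 0 + q 0, p 0 - q 0} := by
        have e : q 0 = (1/2 : ℂ) • ((p 0 + q 0) - (p 0 - q 0)) := by module
        have h3 := Submodule.smul_mem _ ((1:ℂ)/2) (sub_mem h1 h2)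
        rwa [← e] at h3
      refine le_antisymm le_top ?_
      refine le_trans htop ?_
      rw [Submodule.span_le]
      rintro w ⟨i, rfl⟩
      simp only [SetLike.mem_coe]
      cases i with
      | inl n =>
        rw [hbl]
        have e : p n = (p n - JMDaux.lam k n • p 0) + JMDaux.lam k n • p 0 := by module
        rw [e]
        exact add_mem (Submodule.mem_sup_right (hJp n))
          (Submodule.mem_sup_left (Submodule.smul_mem _ _ hp0mem))
      | inr n =>
        rw [hbr]
        have e : q n = (q n - JMDaux.lam k n • q 0) + JMDaux.lam k n • q 0 := by module
        rw [e]
        exact add_mem (Submodule.mem_sup_right (hJq n))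
          (Submodule.mem_sup_left (Submodule.smul_mem _ _ hq0mem))
    · intro a b hab
      have h1 := hψ₁N _ hab
      have h2 := hψ₂N _ hab
      rw [_root_.map_add, _root_.map_smul, _root_.map_smul, _root_.map_add,
        _root_.map_sub, hψ₁p, hψ₁q, JMDaux.lam_zero] at h1
      simp only [smul_eq_mul] at h1
      norm_num at h1
      rw [_root_.map_add, _root_.map_smul, _root_.map_smul, _root_.map_add,
        _root_.map_sub, hψ₂p, hψ₂q, JMDaux.lam_zero] at h2
      simp only [smul_eq_mul] at h2
      norm_num at h2
      constructor
      · linear_combination h1/2 + h2/2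
      · linear_combination h1/2 - h2/2
    · have e : τ (p 0 + q 0) - (p 0 + q 0) = 0 := by
        rw [_root_.map_add, hτp0, hτq0]; abel
      rw [e]; exact N.zero_mem
    · have e : τ (p 0 - q 0) + (p 0 - q 0) = 0 := by
        rw [_root_.map_sub, hτp0, hτq0]; abel
      rw [e]; exact N.zero_mem
  -- Goal 5 : injectivity
  have hinj : Function.Injective (Eo : V →ₗ[ℂ] V) := by
    rw [← LinearMap.ker_eq_bot]
    rw [Submodule.eq_bot_iff]
    intro u hu
    rw [LinearMap.mem_ker] at hu
    by_contra hne
    have hrepr : B.repr u ≠ 0 := fun h => hne (by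
      have := congrArg B.repr.symm h
      simpa using this)
    have hcoordp : ∀ (m : ℕ) (j : ℕ ⊕ ℕ),
        B.coord j (p m) = if Sum.inl m = j then 1 else 0 := by
      intro m j
      rw [← hbl, ← hB, Module.Basis.coord_apply, Module.Basis.repr_self]
      exact Finsupp.single_apply
    have hcoordq : ∀ (m : ℕ) (j : ℕ ⊕ ℕ),
        B.coord j (q m) = if Sum.inr m = j then 1 else 0 := by
      intro m j
      rw [← hbr, ← hB, Module.Basis.coord_apply, Module.Basis.repr_self]
      exact Finsupp.single_apply
    have hsum : ∀ j : ℕ ⊕ ℕ,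
        (∑ i ∈ (B.repr u).support, (B.repr u) i * B.coord j (Eo (bb i))) = 0 := by
      intro j
      have h1 : u = ∑ i ∈ (B.repr u).support, (B.repr u) i • bb i := by
        conv_lhs => rw [← B.linearCombination_repr u]
        rw [Finsupp.linearCombination_apply, Finsupp.sum]
        exact Finset.sum_congr rfl fun i _ => by rw [hB]
      have h2 : Eo u = ∑ i ∈ (B.repr u).support, (B.repr u) i • Eo (bb i) := by
        conv_lhs => rw [h1]
        rw [map_sum]
        exact Finset.sum_congr rfl fun i _ => by rw [_root_.map_smul]
      calc (∑ i ∈ (B.repr u).support, (B.repr u) i * B.coord j (Eo (bb i)))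
          = B.coord j (Eo u) := by
            rw [h2, map_sum]
            exact (Finset.sum_congr rfl fun i _ => by rw [_root_.map_smul, smul_eq_mul]).symm
        _ = 0 := by rw [hu, _root_.map_zero]
    have hvanl : ∀ m, (B.repr u) (Sum.inl m) = 0 := by
      by_contra hcon
      push_neg at hcon
      obtain ⟨m₀, hm₀⟩ := hcon
      set sn : Finset ℕ := (((B.repr u).support.image (Sum.elim id fun _ => 0)).filter
        (fun n => (B.repr u) (Sum.inl n) ≠ 0)) with hsn
      have hm₀sn : m₀ ∈ sn := by
        rw [hsn, Finset.mem_filter]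
        exact ⟨Finset.mem_image.mpr ⟨Sum.inl m₀, Finsupp.mem_support_iff.mpr hm₀, rfl⟩, hm₀⟩
      have hsnne : sn.Nonempty := ⟨m₀, hm₀sn⟩
      have hn₀ne : (B.repr u) (Sum.inl (sn.max' hsnne)) ≠ 0 :=
        (Finset.mem_filter.mp (sn.max'_mem hsnne)).2
      set n₀ := sn.max' hsnne with hn₀
      have hmax : ∀ m, n₀ < m → (B.repr u) (Sum.inl m) = 0 := by
        intro m hm
        by_contra hmne
        have hmem : m ∈ sn := by
          rw [hsn, Finset.mem_filter]
          exact ⟨Finset.mem_image.mpr ⟨Sum.inl m, Finsupp.mem_support_iff.mpr hmne, rfl⟩, hmne⟩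
        exact absurd (sn.le_max' m hmem) (by omega)
      have hside : ∀ i ∈ (B.repr u).support, i ≠ Sum.inl n₀ →
          (B.repr u) i * B.coord (Sum.inl (n₀+1)) (Eo (bb i)) = 0 := by
        rintro i - hi
        cases i with
        | inr m =>
          have hc : B.coord (Sum.inl (n₀+1)) (Eo (bb (Sum.inr m))) = 0 := by
            rw [hbr]
            rcases m with _ | m
            · rw [hEq0, _root_.map_add, _root_.map_smul, _root_.map_smul, hcoordq, hcoordq]
              simp
            · rw [hEq m, _root_.map_add, _root_.map_sub, _root_.map_smul, _root_.map_smul,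
                _root_.map_smul, hcoordq, hcoordq, hcoordq]
              simp
          rw [hc, mul_zero]
        | inl m =>
          have hmn : m ≠ n₀ := fun h => hi (by rw [h])
          by_cases hlt : n₀ < m
          · rw [hmax m hlt, zero_mul]
          · have hmlt : m < n₀ := by omega
            have hc : B.coord (Sum.inl (n₀+1)) (Eo (bb (Sum.inl m))) = 0 := by
              rw [hbl]
              rcases m with _ | m
              · rw [hEp0, _root_.map_sub, _root_.map_smul, _root_.map_smul, hcoordp, hcoordp]
                rw [if_neg (by simp), if_neg (by simp; omega)]
                simp
              · rw [hEp m, _root_.map_sub, _root_.map_add, _root_.map_smul, _root_.map_smul,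
                  _root_.map_smul, hcoordp, hcoordp, hcoordp]
                rw [if_neg (by simp; omega), if_neg (by simp; omega), if_neg (by simp; omega)]
                simp
            rw [hc, mul_zero]
      have hkey := hsum (Sum.inl (n₀+1))
      rw [Finset.sum_eq_single_of_mem (Sum.inl n₀)
        (Finsupp.mem_support_iff.mpr hn₀ne) hside] at hkey
      have hval : B.coord (Sum.inl (n₀+1)) (Eo (bb (Sum.inl n₀))) = -(I/4) := by
        rw [hbl]
        rcases n₀ with _ | m
        · rw [hEp0, _root_.map_sub, _root_.map_smul, _root_.map_smul, hcoordp, hcoordp]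
          rw [if_neg (by simp), if_pos rfl]
          simp
        · rw [hEp m, _root_.map_sub, _root_.map_add, _root_.map_smul, _root_.map_smul,
            _root_.map_smul, hcoordp, hcoordp, hcoordp]
          rw [if_neg (by simp), if_neg (by simp; omega), if_pos rfl]
          simp
      rw [hval] at hkey
      rcases mul_eq_zero.mp hkey with h | h
      · exact hn₀ne h
      · rw [neg_eq_zero, div_eq_zero_iff] at h
        rcases h with h | h
        · exact Complex.I_ne_zero h
        · norm_num at h
    have hvanr : ∀ m, (B.repr u) (Sum.inr m) = 0 := by
      by_contra hcon
      push_neg at hcon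
      obtain ⟨m₀, hm₀⟩ := hcon
      set sn : Finset ℕ := (((B.repr u).support.image (Sum.elim (fun _ => 0) id)).filter
        (fun n => (B.repr u) (Sum.inr n) ≠ 0)) with hsn
      have hm₀sn : m₀ ∈ sn := by
        rw [hsn, Finset.mem_filter]
        exact ⟨Finset.mem_image.mpr ⟨Sum.inr m₀, Finsupp.mem_support_iff.mpr hm₀, rfl⟩, hm₀⟩
      have hsnne : sn.Nonempty := ⟨m₀, hm₀sn⟩
      have hn₀ne : (B.repr u) (Sum.inr (sn.max' hsnne)) ≠ 0 :=
        (Finset.mem_filter.mp (sn.max'_mem hsnne)).2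
      set n₀ := sn.max' hsnne with hn₀
      have hmax : ∀ m, n₀ < m → (B.repr u) (Sum.inr m) = 0 := by
        intro m hm
        by_contra hmne
        have hmem : m ∈ sn := by
          rw [hsn, Finset.mem_filter]
          exact ⟨Finset.mem_image.mpr ⟨Sum.inr m, Finsupp.mem_support_iff.mpr hmne, rfl⟩, hmne⟩
        exact absurd (sn.le_max' m hmem) (by omega)
      have hside : ∀ i ∈ (B.repr u).support, i ≠ Sum.inr n₀ →
          (B.repr u) i * B.coord (Sum.inr (n₀+1)) (Eo (bb i)) = 0 := by
        rintro i - hi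
        cases i with
        | inl m =>
          have hc : B.coord (Sum.inr (n₀+1)) (Eo (bb (Sum.inl m))) = 0 := by
            rw [hbl]
            rcases m with _ | m
            · rw [hEp0, _root_.map_sub, _root_.map_smul, _root_.map_smul, hcoordp, hcoordp]
              simp
            · rw [hEp m, _root_.map_sub, _root_.map_add, _root_.map_smul, _root_.map_smul,
                _root_.map_smul, hcoordp, hcoordp, hcoordp]
              simp
          rw [hc, mul_zero]
        | inr m =>
          have hmn : m ≠ n₀ := fun h => hi (by rw [h])
          by_cases hlt : n₀ < m
          · rw [hmax m hlt, zero_mul]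
          · have hmlt : m < n₀ := by omega
            have hc : B.coord (Sum.inr (n₀+1)) (Eo (bb (Sum.inr m))) = 0 := by
              rw [hbr]
              rcases m with _ | m
              · rw [hEq0, _root_.map_add, _root_.map_smul, _root_.map_smul, hcoordq, hcoordq]
                rw [if_neg (by simp), if_neg (by simp; omega)]
                simp
              · rw [hEq m, _root_.map_add, _root_.map_sub, _root_.map_smul, _root_.map_smul,
                  _root_.map_smul, hcoordq, hcoordq, hcoordq]
                rw [if_neg (by simp; omega), if_neg (by simp; omega), if_neg (by simp; omega)]
                simp
            rw [hc, mul_zero]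
      have hkey := hsum (Sum.inr (n₀+1))
      rw [Finset.sum_eq_single_of_mem (Sum.inr n₀)
        (Finsupp.mem_support_iff.mpr hn₀ne) hside] at hkey
      have hval : B.coord (Sum.inr (n₀+1)) (Eo (bb (Sum.inr n₀))) = I/4 := by
        rw [hbr]
        rcases n₀ with _ | m
        · rw [hEq0, _root_.map_add, _root_.map_smul, _root_.map_smul, hcoordq, hcoordq]
          rw [if_neg (by simp), if_pos rfl]
          simp
        · rw [hEq m, _root_.map_add, _root_.map_sub, _root_.map_smul, _root_.map_smul,
            _root_.map_smul, hcoordq, hcoordq, hcoordq]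
          rw [if_neg (by simp), if_neg (by simp; omega), if_pos rfl]
          simp
      rw [hval] at hkey
      rcases mul_eq_zero.mp hkey with h | h
      · exact hn₀ne h
      · rw [div_eq_zero_iff] at h
        rcases h with h | h
        · exact Complex.I_ne_zero h
        · norm_num at h
    apply hrepr
    apply Finsupp.ext
    intro i
    cases i with
    | inl m => exact hvanl m
    | inr m => exact hvanr m
  exact ⟨hquot, hG2, hG3, ⟨p 0 + q 0, p 0 - q 0, hG4.1, hG4.2.1, hG4.2.2.1, hG4.2.2.2⟩, hinj⟩
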